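/- Let X be a connected topological space that is not compact. Then for every compact subset C of X × (0,1) there exists a compact set D with C ⊆ D ⊆ X × (0,1) such that (X × (0,1)) \ D is connected. (In particular, the product of a connected noncompact space with the open interval (0,1) is one-ended.) -/

import Mathlib

universe u

/-- If `X` is a connected, noncompact topological space, then every compact subset of
`X × (0,1)` is contained in a compact subset whose complement is connected; in particular,
`X × (0,1)` is one-ended. -/
theorem exists_compact_superset_compl_connected (X : Type u) [TopologicalSpace X]
    [ConnectedSpace X] [NoncompactSpace X]
    (C : Set (X × ↥(Set.Ioo (0 : ℝ) 1))) (hC : IsCompact C) :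
    ∃ D : Set (X × ↥(Set.Ioo (0 : ℝ) 1)), IsCompact D ∧ C ⊆ D ∧ IsConnected Dᶜ := by
  classical
  -- projections of C
  set K : Set X := Prod.fst '' C with hKdef
  have hKc : IsCompact K := hC.image continuous_fst
  set S : Set ℝ := (fun z : X × ↥(Set.Ioo (0 : ℝ) 1) => (z.2 : ℝ)) '' C with hSdef
  have hS : IsCompact S := hC.image (continuous_subtype_val.comp continuous_snd)
  set S' : Set ℝ := insert (1/2 : ℝ) S with hS'def
  have hS' : IsCompact S' := hS.insert _
  have hS'sub : S' ⊆ Set.Ioo (0:ℝ) 1 := by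
    intro t ht
    rcases ht with rfl | ht
    · norm_num
    · rcases ht with ⟨z, _, rfl⟩; exact z.2.2
  have hS'ne : S'.Nonempty := ⟨1/2, Set.mem_insert _ _⟩
  set a := sInf S' with hadef
  set b := sSup S' with hbdef
  have haS : a ∈ S' := hS'.sInf_mem hS'ne
  have hbS : b ∈ S' := hS'.sSup_mem hS'ne
  have ha : a ∈ Set.Ioo (0:ℝ) 1 := hS'sub haS
  have hb : b ∈ Set.Ioo (0:ℝ) 1 := hS'sub hbS
  have hab : a ≤ b := csInf_le_csSup hS'ne hS'.bddBelow hS'.bddAbove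
  -- the vertical slab
  set J : Set ↥(Set.Ioo (0:ℝ) 1) := {t | (t : ℝ) ∈ Set.Icc a b} with hJdef
  have hIccsub : Set.Icc a b ⊆ Set.Ioo (0:ℝ) 1 := fun t ht =>
    ⟨lt_of_lt_of_le ha.1 ht.1, lt_of_le_of_lt ht.2 hb.2⟩
  have hJimg : Subtype.val '' J = Set.Icc a b := by
    apply Set.Subset.antisymm
    · rintro t ⟨u, hu, rfl⟩; exact hu
    · intro t ht
      exact ⟨⟨t, hIccsub ht⟩, ht, rfl⟩
  have hJ : IsCompact J := by
    rw [Topology.IsEmbedding.subtypeVal.isCompact_iff, hJimg]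
    exact isCompact_Icc
  refine ⟨K ×ˢ J, hKc.prod hJ, ?_, ?_⟩
  · -- C ⊆ D
    intro z hz
    refine ⟨⟨z, hz, rfl⟩, ?_, ?_⟩
    · exact csInf_le hS'.bddBelow (Set.mem_insert_of_mem _ ⟨z, hz, rfl⟩)
    · exact le_csSup hS'.bddAbove (Set.mem_insert_of_mem _ ⟨z, hz, rfl⟩)
  · -- complement connected
    obtain ⟨x₀, hx₀⟩ : ∃ x, x ∉ K := by
      by_contra h
      push_neg at h
      have hKu : K = Set.univ := Set.eq_univ_of_forall h
      exact NoncompactSpace.noncompact_univ (X := X) (hKu ▸ hKc)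
    have hpa : (0:ℝ) < a/2 ∧ a/2 < 1 := ⟨by linarith [ha.1], by linarith [ha.1, ha.2]⟩
    have hpb : (0:ℝ) < (b+1)/2 ∧ (b+1)/2 < 1 := ⟨by linarith [hb.1], by linarith [hb.2]⟩
    set pa : ↥(Set.Ioo (0:ℝ) 1) := ⟨a/2, hpa.1, hpa.2⟩ with hpadef
    set pb : ↥(Set.Ioo (0:ℝ) 1) := ⟨(b+1)/2, hpb.1, hpb.2⟩ with hpbdef
    have hpa_lt : (pa : ℝ) < a := by simp [hpadef]; linarith [ha.1]
    have hpb_gt : b < (pb : ℝ) := by simp [hpbdef]; linarith [hb.2]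
    set S0 : Set (X × ↥(Set.Ioo (0:ℝ) 1)) := {z | (z.2 : ℝ) < a} with hS0def
    set S1 : Set (X × ↥(Set.Ioo (0:ℝ) 1)) := {z | b < (z.2 : ℝ)} with hS1def
    set F : X → Set (X × ↥(Set.Ioo (0:ℝ) 1)) := fun x => {z | z.1 = x} with hFdef
    -- preconnectedness of pieces
    have hT0 : IsPreconnected {t : ↥(Set.Ioo (0:ℝ) 1) | (t : ℝ) < a} := by
      rw [← Topology.IsInducing.subtypeVal.isPreconnected_image]
      have : Subtype.val '' {t : ↥(Set.Ioo (0:ℝ) 1) | (t : ℝ) < a} = Set.Ioo 0 a := by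
        apply Set.Subset.antisymm
        · rintro t ⟨u, hu, rfl⟩; exact ⟨u.2.1, hu⟩
        · intro t ht
          exact ⟨⟨t, ht.1, lt_trans ht.2 ha.2⟩, ht.2, rfl⟩
      rw [this]; exact isPreconnected_Ioo
    have hT1 : IsPreconnected {t : ↥(Set.Ioo (0:ℝ) 1) | b < (t : ℝ)} := by
      rw [← Topology.IsInducing.subtypeVal.isPreconnected_image]
      have : Subtype.val '' {t : ↥(Set.Ioo (0:ℝ) 1) | b < (t : ℝ)} = Set.Ioo b 1 := by
        apply Set.Subset.antisymm
        · rintro t ⟨u, hu, rfl⟩; exact ⟨hu, u.2.2⟩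
        · intro t ht
          exact ⟨⟨t, lt_trans hb.1 ht.1, ht.2⟩, ht.1, rfl⟩
      rw [this]; exact isPreconnected_Ioo
    have hS0c : IsPreconnected S0 := by
      have : S0 = (Set.univ : Set X) ×ˢ {t : ↥(Set.Ioo (0:ℝ) 1) | (t : ℝ) < a} := by
        ext ⟨y, t⟩; simp [hS0def]
      rw [this]
      exact isPreconnected_univ.prod hT0
    have hS1c : IsPreconnected S1 := by
      have : S1 = (Set.univ : Set X) ×ˢ {t : ↥(Set.Ioo (0:ℝ) 1) | b < (t : ℝ)} := by
        ext ⟨y, t⟩; simp [hS1def]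
      rw [this]
      exact isPreconnected_univ.prod hT1
    haveI : PreconnectedSpace ↥(Set.Ioo (0:ℝ) 1) :=
      Subtype.preconnectedSpace (isConnected_Ioo (by norm_num)).isPreconnected
    have hFc : ∀ x : X, IsPreconnected (F x) := by
      intro x
      have : F x = ({x} : Set X) ×ˢ (Set.univ : Set ↥(Set.Ioo (0:ℝ) 1)) := by
        ext ⟨y, t⟩; simp [hFdef, eq_comm]
      rw [this]
      exact isPreconnected_singleton.prod isPreconnected_univ
    -- pieces preconnected and containing p
    set p : X × ↥(Set.Ioo (0:ℝ) 1) := (x₀, pa) with hpdef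
    have hpS0 : p ∈ S0 := hpa_lt
    set c : Set (Set (X × ↥(Set.Ioo (0:ℝ) 1))) :=
      ((fun x => S0 ∪ F x) '' Kᶜ) ∪ {S0 ∪ F x₀ ∪ S1} with hcdef
    have hmemp : ∀ s ∈ c, p ∈ s := by
      rintro s (⟨x, _, rfl⟩ | rfl)
      · exact Or.inl hpS0
      · exact Or.inl (Or.inl hpS0)
    have hpre : ∀ s ∈ c, IsPreconnected s := by
      rintro s (⟨x, _, rfl⟩ | rfl)
      · exact IsPreconnected.union (x, pa) hpa_lt (show (x, pa) ∈ F x from rfl) hS0c (hFc x)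
      · exact IsPreconnected.union (x₀, pb)
          (Or.inr (show (x₀, pb) ∈ F x₀ from rfl)) hpb_gt
          (IsPreconnected.union (x₀, pa) hpa_lt (show (x₀, pa) ∈ F x₀ from rfl) hS0c (hFc x₀))
          hS1c
    have hUnion : (K ×ˢ J)ᶜ = ⋃₀ c := by
      apply Set.Subset.antisymm
      · intro z hz
        by_cases hzK : z.1 ∈ K
        · have hzJ : z.2 ∉ J := fun h => hz ⟨hzK, h⟩
          rw [hJdef] at hzJ
          simp only [Set.mem_setOf_eq, Set.mem_Icc, not_and_or, not_le] at hzJ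
          refine ⟨S0 ∪ F x₀ ∪ S1, Or.inr rfl, ?_⟩
          rcases hzJ with h | h
          · exact Or.inl (Or.inl h)
          · exact Or.inr h
        · exact ⟨S0 ∪ F z.1, Or.inl ⟨z.1, hzK, rfl⟩, Or.inr rfl⟩
      · rintro z ⟨s, hs, hzs⟩
        have hsub : ∀ x, x ∉ K → S0 ∪ F x ⊆ (K ×ˢ J)ᶜ := by
          intro x hx z hz hzD
          rcases hz with hz | hz
          · exact absurd hzD.2.1 (not_le.mpr hz)
          · exact hx (hz ▸ hzD.1)
        rcases hs with ⟨x, hx, rfl⟩ | rfl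
        · exact hsub x hx hzs
        · rcases hzs with hz | hz
          · exact hsub x₀ hx₀ hz
          · exact fun hzD => absurd hzD.2.2 (not_le.mpr hz)
    rw [hUnion]
    exact ⟨⟨p, ⟨S0 ∪ F x₀ ∪ S1, Or.inr rfl, Or.inl (Or.inl hpS0)⟩⟩,
      isPreconnected_sUnion p c hmemp hpre⟩
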